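/- For the moment path Mom^d : [0,1] → ℝ^d, t ↦ (t, t², ..., t^d), the k-th level signature satisfies σ(Mom^d)(e_{i1}* ⊗ ... ⊗ e_{ik}*) = (i2 · i3 ⋯ ik) / ((i1+i2)(i1+i2+i3) ⋯ (i1+...+ik)) for all 1 ≤ i1,...,ik ≤ d. -/

import Mathlib

open MeasureTheory

noncomputable section

/-- The ordered simplex `0 ≤ t 0 ≤ t 1 ≤ ⋯ ≤ t (k-1) ≤ 1` in `Fin k → ℝ`. -/
def orderedSimplex (k : ℕ) : Set (Fin k → ℝ) :=
  {t | Monotone t ∧ ∀ a, t a ∈ Set.Icc (0 : ℝ) 1}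

/-- Iterated-integral (path) signature entry for a family of scalar coordinate
functions `f a : ℝ → ℝ`, i.e. `⟨σ(X), e_{i₁}* ⊗ ⋯ ⊗ e_{i_k}*⟩` with `f a = X_{i_a}`. -/
def pathSig {k : ℕ} (f : Fin k → ℝ → ℝ) : ℝ :=
  ∫ t in orderedSimplex k, ∏ a, deriv (f a) (t a)

/-- Mixed second partial derivative `∂²/∂s∂t`. -/
def d12 (f : ℝ → ℝ → ℝ) (s t : ℝ) : ℝ :=
  deriv (fun t' => deriv (fun s' => f s' t') s) t

/-- id-signature entry for a family of scalar membrane coordinate functions. -/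
def memSig {k : ℕ} (f : Fin k → ℝ → ℝ → ℝ) : ℝ :=
  ∫ p in (orderedSimplex k) ×ˢ (orderedSimplex k), ∏ a, d12 (f a) (p.1 a) (p.2 a)


section MomentSigAux
set_option maxHeartbeats 1000000

open MeasureTheory Finset in
private lemma sum_Iic_succ {M : Type*} [AddCommMonoid M] {m : ℕ} (f : Fin (m+1) → M) (a : Fin m) :
    ∑ b ∈ Finset.Iic a.succ, f b = f 0 + ∑ b ∈ Finset.Iic a, f b.succ := by
  have h : Finset.Iic a.succ = insert 0 ((Finset.Iic a).map ⟨Fin.succ, Fin.succ_injective m⟩) := by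
    ext b
    simp only [Finset.mem_Iic, Finset.mem_insert, Finset.mem_map, Function.Embedding.coeFn_mk]
    constructor
    · intro hb
      rcases Fin.eq_zero_or_eq_succ b with h0 | ⟨c, rfl⟩
      · exact Or.inl h0
      · exact Or.inr ⟨c, Fin.succ_le_succ_iff.1 hb, rfl⟩
    · rintro (rfl | ⟨c, hc, rfl⟩)
      · exact Fin.zero_le _
      · exact Fin.succ_le_succ_iff.2 hc
  rw [h, Finset.sum_insert (by simp [Fin.succ_ne_zero]), Finset.sum_map]
  rfl

private lemma monotone_cons_iff' {m : ℕ} {x : ℝ} {y : Fin (m+1) → ℝ} :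
    Monotone (Fin.cons x y : Fin (m+2) → ℝ) ↔ x ≤ y 0 ∧ Monotone y := by
  constructor
  · intro h
    refine ⟨by simpa using h (Fin.zero_le (Fin.succ 0)), fun i j hij => ?_⟩
    simpa using h (Fin.succ_le_succ_iff.2 hij)
  · rintro ⟨hx, hy⟩ i j hij
    induction i using Fin.cases with
    | zero =>
      induction j using Fin.cases with
      | zero => exact le_refl _
      | succ c =>
        simp only [Fin.cons_zero, Fin.cons_succ]
        exact hx.trans (hy (Fin.zero_le c))
    | succ b =>
      induction j using Fin.cases with
      | zero => exact absurd (Fin.le_zero_iff.1 hij) (Fin.succ_ne_zero b)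
      | succ c =>
        simp only [Fin.cons_succ]
        exact hy (Fin.succ_le_succ_iff.1 hij)

private lemma cons_mem_simplex_iff {m : ℕ} {x : ℝ} {y : Fin (m+1) → ℝ} :
    (Fin.cons x y : Fin (m+2) → ℝ) ∈ orderedSimplex (m+2)
      ↔ y ∈ orderedSimplex (m+1) ∧ x ∈ Set.Icc 0 (y 0) := by
  simp only [orderedSimplex, Set.mem_setOf_eq, monotone_cons_iff']
  constructor
  · rintro ⟨⟨hx, hy⟩, hmem⟩
    refine ⟨⟨hy, fun a => by simpa using hmem a.succ⟩, ?_, hx⟩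
    have := hmem 0
    simpa using this.1
  · rintro ⟨⟨hy, hIcc⟩, hx0, hxy⟩
    refine ⟨⟨hxy, hy⟩, fun a => ?_⟩
    induction a using Fin.cases with
    | zero =>
      simp only [Fin.cons_zero]
      exact ⟨hx0, hxy.trans (hIcc 0).2⟩
    | succ b =>
      simpa using hIcc b

private lemma isClosed_orderedSimplex (m : ℕ) : IsClosed (orderedSimplex m) := by
  have h : orderedSimplex m =
      (⋂ (p : Fin m × Fin m) (_ : p.1 ≤ p.2), {t : Fin m → ℝ | t p.1 ≤ t p.2}) ∩
        ⋂ a, (fun t : Fin m → ℝ => t a) ⁻¹' Set.Icc (0:ℝ) 1 := by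
    ext t
    simp only [orderedSimplex, Set.mem_inter_iff, Set.mem_iInter, Set.mem_setOf_eq,
      Set.mem_preimage]
    exact ⟨fun ⟨h1, h2⟩ => ⟨fun p hp => h1 hp, h2⟩,
      fun ⟨h1, h2⟩ => ⟨fun i j hij => h1 (i,j) hij, h2⟩⟩
  rw [h]
  exact (isClosed_iInter fun p => isClosed_iInter fun _ =>
      isClosed_le (continuous_apply p.1) (continuous_apply p.2)).inter
    (isClosed_iInter fun a => IsClosed.preimage (continuous_apply a) isClosed_Icc)

private lemma integral_pow_Icc (c : ℝ) (hc : 0 ≤ c) (p : ℕ) (hp : p ≠ 0) :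
    ∫ x in Set.Icc (0:ℝ) c, (p:ℝ) * x ^ (p-1) = c ^ p := by
  have h1 : p - 1 + 1 = p := Nat.succ_pred_eq_of_ne_zero hp
  rw [MeasureTheory.integral_Icc_eq_integral_Ioc, ← intervalIntegral.integral_of_le hc,
    intervalIntegral.integral_const_mul, integral_pow, h1, zero_pow hp]
  have hp' : (p : ℝ) ≠ 0 := Nat.cast_ne_zero.2 hp
  have h2 : ((p - 1 : ℕ) : ℝ) + 1 = (p : ℝ) := by exact_mod_cast congrArg (Nat.cast : ℕ → ℝ) h1
  rw [h2]
  field_simp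
  simp

open MeasureTheory Finset in
private lemma simplex_integral : ∀ (k : ℕ) (n : Fin (k+1) → ℕ), (∀ a, n a ≠ 0) →
    ∫ t in orderedSimplex (k+1), ∏ a, ((n a : ℝ) * t a ^ (n a - 1))
      = (∏ a, (n a : ℝ)) / ∏ a, (∑ b ∈ Finset.Iic a, (n b : ℝ)) := by
  intro k
  induction k with
  | zero =>
    intro n hn
    have hmp := (volume_preserving_funUnique (Fin 1) ℝ).symm
    have key := hmp.setIntegral_preimage_emb (MeasurableEquiv.measurableEmbedding _)
      (fun t : Fin 1 → ℝ => ∏ a, ((n a : ℝ) * t a ^ (n a - 1))) (orderedSimplex 1)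
    show ∫ t in orderedSimplex 1, ∏ a : Fin 1, ((n a : ℝ) * t a ^ (n a - 1))
      = (∏ a : Fin 1, (n a : ℝ)) / ∏ a : Fin 1, (∑ b ∈ Finset.Iic a, (n b : ℝ))
    refine Eq.trans key.symm ?_
    have hpre : (MeasurableEquiv.funUnique (Fin 1) ℝ).symm ⁻¹' (orderedSimplex 1)
        = Set.Icc (0:ℝ) 1 := by
      ext x
      simp only [Set.mem_preimage, orderedSimplex, Set.mem_setOf_eq, MeasurableEquiv.funUnique,
        MeasurableEquiv.symm_mk, MeasurableEquiv.coe_mk, Equiv.funUnique]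
      constructor
      · intro ⟨_, h2⟩; exact h2 0
      · intro hx; exact ⟨monotone_const, fun _ => hx⟩
    rw [hpre]
    have heval : ∀ x : ℝ, (∏ a : Fin 1, ((n a : ℝ) *
        ((MeasurableEquiv.funUnique (Fin 1) ℝ).symm x a) ^ (n a - 1)))
        = (n 0 : ℝ) * x ^ (n 0 - 1) := by
      intro x
      simp [MeasurableEquiv.funUnique, Equiv.funUnique]
    simp_rw [heval]
    rw [integral_pow_Icc 1 zero_le_one (n 0) (hn 0), one_pow]
    have hIic : Finset.Iic (0 : Fin 1) = {0} := by decide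
    simp [hIic, Nat.cast_ne_zero.2 (hn 0)]
  | succ k IH =>
    intro n hn
    set F : (Fin (k+2) → ℝ) → ℝ := fun t => ∏ a, ((n a : ℝ) * t a ^ (n a - 1)) with hF
    set G : ℝ × (Fin (k+1) → ℝ) → ℝ :=
      fun p => ((n 0 : ℝ) * p.1 ^ (n 0 - 1)) * ∏ a, ((n a.succ : ℝ) * p.2 a ^ (n a.succ - 1))
      with hG
    have hGF : ∀ p : ℝ × (Fin (k+1) → ℝ), F (Fin.cons p.1 p.2) = G p := by
      intro p
      simp [hF, hG, Fin.prod_univ_succ]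
    have hsymm : ∀ p : ℝ × (Fin (k+1) → ℝ),
        (MeasurableEquiv.piFinSuccAbove (fun _ : Fin (k+2) => ℝ) 0).symm p
          = Fin.cons p.1 p.2 := by
      intro p
      simp [MeasurableEquiv.piFinSuccAbove_symm_apply, Fin.insertNthEquiv, Fin.insertNth_zero']
    have hmp := (volume_preserving_piFinSuccAbove (fun _ : Fin (k+2) => ℝ) 0).symm
    have key := hmp.setIntegral_preimage_emb (MeasurableEquiv.measurableEmbedding _) F
      (orderedSimplex (k+2))
    set T := (MeasurableEquiv.piFinSuccAbove (fun _ : Fin (k+2) => ℝ) 0).symm ⁻¹'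
      (orderedSimplex (k+2)) with hT
    have hTset : T = {p : ℝ × (Fin (k+1) → ℝ) |
        p.2 ∈ orderedSimplex (k+1) ∧ p.1 ∈ Set.Icc 0 (p.2 0)} := by
      ext p
      rw [hT, Set.mem_preimage, hsymm p]
      exact cons_mem_simplex_iff
    have hTclosed : IsClosed T := by
      rw [hTset]
      have h1 : IsClosed {p : ℝ × (Fin (k+1) → ℝ) | p.2 ∈ orderedSimplex (k+1)} :=
        (isClosed_orderedSimplex (k+1)).preimage continuous_snd
      have h2 : IsClosed {p : ℝ × (Fin (k+1) → ℝ) | 0 ≤ p.1} :=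
        isClosed_le continuous_const continuous_fst
      have h3 : IsClosed {p : ℝ × (Fin (k+1) → ℝ) | p.1 ≤ p.2 0} :=
        isClosed_le continuous_fst ((continuous_apply 0).comp continuous_snd)
      have heq : {p : ℝ × (Fin (k+1) → ℝ) |
          p.2 ∈ orderedSimplex (k+1) ∧ p.1 ∈ Set.Icc 0 (p.2 0)}
          = {p : ℝ × (Fin (k+1) → ℝ) | p.2 ∈ orderedSimplex (k+1)}
            ∩ ({p : ℝ × (Fin (k+1) → ℝ) | 0 ≤ p.1} ∩ {p : ℝ × (Fin (k+1) → ℝ) | p.1 ≤ p.2 0}) := by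
        ext p
        simp only [Set.mem_setOf_eq, Set.mem_inter_iff, Set.mem_Icc]

      rw [heq]
      exact h1.inter (h2.inter h3)
    have hTmeas : MeasurableSet T := hTclosed.measurableSet
    have hTcompact : IsCompact T := by
      refine IsCompact.of_isClosed_subset (isCompact_Icc
        (a := ((0:ℝ), (0 : Fin (k+1) → ℝ))) (b := (1, 1))) hTclosed ?_
      rw [hTset]
      rintro ⟨x, y⟩ ⟨hy, hx⟩
      simp only [Set.mem_Icc, Prod.le_def, Pi.le_def]
      exact ⟨⟨hx.1, fun a => (hy.2 a).1⟩, ⟨hx.2.trans (hy.2 0).2, fun a => (hy.2 a).2⟩⟩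
    have hGcont : Continuous G := by
      rw [hG]
      fun_prop
    have hGint : IntegrableOn G T := hGcont.continuousOn.integrableOn_compact hTcompact
    have hInd : Integrable (T.indicator G) (volume.prod volume) := by
      rw [← Measure.volume_eq_prod, integrable_indicator_iff hTmeas]
      exact hGint
    rw [← key]
    have hcomp : ∀ p : ℝ × (Fin (k+1) → ℝ),
        F ((MeasurableEquiv.piFinSuccAbove (fun _ : Fin (k+2) => ℝ) 0).symm p) = G p := by
      intro p; rw [hsymm p, hGF]
    simp_rw [hcomp]
    rw [← integral_indicator hTmeas, Measure.volume_eq_prod, integral_prod_symm _ hInd]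
    have hinner : ∀ y : Fin (k+1) → ℝ,
        (∫ x, T.indicator G (x, y)) = Set.indicator (orderedSimplex (k+1))
          (fun y => (y 0) ^ (n 0) * ∏ a, ((n a.succ : ℝ) * y a ^ (n a.succ - 1))) y := by
      intro y
      by_cases hy : y ∈ orderedSimplex (k+1)
      · have hfun : (fun x => T.indicator G (x, y))
            = Set.indicator (Set.Icc 0 (y 0)) (fun x => G (x, y)) := by
          funext x
          by_cases hx : x ∈ Set.Icc (0:ℝ) (y 0)
          · rw [Set.indicator_of_mem hx, Set.indicator_of_mem (by rw [hTset]; exact ⟨hy, hx⟩)]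
          · rw [Set.indicator_of_notMem hx,
              Set.indicator_of_notMem (by rw [hTset]; exact fun h => hx h.2)]
        rw [hfun, integral_indicator measurableSet_Icc, Set.indicator_of_mem hy]
        simp only [hG]
        rw [MeasureTheory.integral_mul_const, integral_pow_Icc (y 0) (hy.2 0).1 (n 0) (hn 0)]
      · have hfun : (fun x => T.indicator G (x, y)) = fun _ => (0:ℝ) := by
          funext x
          rw [Set.indicator_of_notMem (by rw [hTset]; exact fun h => hy h.1)]
        rw [hfun, integral_zero, Set.indicator_of_notMem hy]
    simp_rw [hinner]
    rw [integral_indicator (isClosed_orderedSimplex (k+1)).measurableSet]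
    set m : Fin (k+1) → ℕ := Fin.cons (n 0 + n 1) (fun a => n a.succ.succ) with hm'
    have hm : ∀ a, m a ≠ 0 := by
      intro a
      induction a using Fin.cases with
      | zero => simp only [hm', Fin.cons_zero]; have := hn 0; omega
      | succ c => simp only [hm', Fin.cons_succ]; exact hn _
    have hM : ((n 0 + n 1 : ℕ) : ℝ) ≠ 0 := by
      have := hn 0
      exact_mod_cast (by omega : (n 0 + n 1 : ℕ) ≠ 0)
    have hpt : ∀ y : Fin (k+1) → ℝ,
        (y 0) ^ (n 0) * ∏ a, ((n a.succ : ℝ) * y a ^ (n a.succ - 1))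
          = ((n 1 : ℝ) / ((n 0 + n 1 : ℕ) : ℝ)) * ∏ a, ((m a : ℝ) * y a ^ (m a - 1)) := by
      intro y
      rw [Fin.prod_univ_succ, Fin.prod_univ_succ]
      simp only [hm', Fin.cons_zero, Fin.cons_succ, Fin.succ_zero_eq_one]
      have hee : n 0 + n 1 - 1 = n 0 + (n 1 - 1) := by have := hn 1; omega
      rw [hee, pow_add, div_mul_eq_mul_div, eq_div_iff hM]
      ring
    simp_rw [hpt]
    rw [MeasureTheory.integral_const_mul, IH m hm]
    -- final algebra
    have hprodm : (∏ a : Fin (k+1), (m a : ℝ))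
        = ((n 0 + n 1 : ℕ) : ℝ) * ∏ a : Fin k, (n a.succ.succ : ℝ) := by
      rw [Fin.prod_univ_succ]
      simp [hm']
    have hprodn : (∏ a : Fin (k+2), (n a : ℝ))
        = (n 0 : ℝ) * ((n 1 : ℝ) * ∏ a : Fin k, (n a.succ.succ : ℝ)) := by
      rw [Fin.prod_univ_succ, Fin.prod_univ_succ]
      simp [Fin.succ_zero_eq_one]
    have hIic0 : ∀ (j : ℕ), Finset.Iic (0 : Fin (j+1)) = {0} := by
      intro j; ext b; simp [Fin.le_zero_iff]
    have hSm : ∀ a : Fin (k+1),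
        (∑ b ∈ Finset.Iic a, (m b : ℝ)) = ∑ b ∈ Finset.Iic a.succ, (n b : ℝ) := by
      intro a
      induction a using Fin.cases with
      | zero =>
        rw [sum_Iic_succ (fun b => (n b : ℝ)) 0, hIic0]
        simp only [Finset.sum_singleton, hm', Fin.cons_zero, Fin.succ_zero_eq_one]
        push_cast
        ring
      | succ c =>
        rw [sum_Iic_succ (fun b => (m b : ℝ)) c, sum_Iic_succ (fun b => (n b : ℝ)) c.succ,
          sum_Iic_succ (fun b => (n b.succ : ℝ)) c]
        simp only [hm', Fin.cons_zero, Fin.cons_succ, Fin.succ_zero_eq_one]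
        push_cast
        ring
    have hdenom : (∏ a : Fin (k+2), (∑ b ∈ Finset.Iic a, (n b : ℝ)))
        = (n 0 : ℝ) * ∏ a : Fin (k+1), (∑ b ∈ Finset.Iic a, (m b : ℝ)) := by
      rw [Fin.prod_univ_succ]
      congr 1
      · rw [hIic0]; simp
      · exact Finset.prod_congr rfl fun a _ => (hSm a).symm
    have hQpos : (0:ℝ) < ∏ a : Fin (k+1), (∑ b ∈ Finset.Iic a, (m b : ℝ)) := by
      apply Finset.prod_pos
      intro a _
      apply Finset.sum_pos
      · intro b _
        exact_mod_cast Nat.pos_of_ne_zero (hm b)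
      · exact ⟨0, Finset.mem_Iic.2 (Fin.zero_le a)⟩
    have hn0 : ((n 0 : ℕ) : ℝ) ≠ 0 := Nat.cast_ne_zero.2 (hn 0)
    rw [hprodm, hprodn, hdenom]
    field_simp
end MomentSigAux

/-- the `k`-th level signature of the moment path
`Mom^d : t ↦ (t, t², …, t^d)` is
`(i₂⋯i_k)/((i₁+i₂)(i₁+i₂+i₃)⋯(i₁+⋯+i_k))`, where the 1-indexed letter `i_a`
corresponds to `(ι a : ℕ) + 1`. -/
theorem moment_path_signature (d k : ℕ) (ι : Fin (k + 1) → Fin d) :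
    pathSig (fun a t => t ^ ((ι a : ℕ) + 1))
      = (∏ a ∈ Finset.Ioi (0 : Fin (k + 1)), (((ι a : ℕ) + 1 : ℕ) : ℝ))
        / ∏ a ∈ Finset.Ioi (0 : Fin (k + 1)),
            (∑ b ∈ Finset.Iic a, (((ι b : ℕ) + 1 : ℕ) : ℝ)) := by
  have h := simplex_integral k (fun a => (ι a : ℕ) + 1) (fun a => Nat.succ_ne_zero _)
  simp only [Nat.add_sub_cancel, Nat.cast_add, Nat.cast_one] at h
  rw [pathSig]
  have hderiv : ∀ (a : Fin (k+1)) (x : ℝ),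
      deriv (fun t : ℝ => t ^ ((ι a : ℕ) + 1)) x = (((ι a : ℕ) : ℝ) + 1) * x ^ ((ι a : ℕ)) := by
    intro a x
    rw [deriv_pow_field]
    push_cast
    ring_nf
  simp_rw [hderiv]
  rw [h]
  simp only [Nat.cast_add, Nat.cast_one]
  have hIoi : Finset.Ioi (0 : Fin (k+1)) = Finset.univ.erase 0 := by
    ext b; simp [Fin.pos_iff_ne_zero]
  have hIic0 : Finset.Iic (0 : Fin (k+1)) = {0} := by
    ext b; simp [Fin.le_zero_iff]
  rw [hIoi,
    ← Finset.mul_prod_erase Finset.univ (fun a => (((ι a : ℕ) : ℝ) + 1)) (Finset.mem_univ 0),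
    ← Finset.mul_prod_erase Finset.univ
      (fun a => ∑ b ∈ Finset.Iic a, (((ι b : ℕ) : ℝ) + 1)) (Finset.mem_univ 0),
    hIic0, Finset.sum_singleton]
  exact mul_div_mul_left _ _ (by positivity)
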